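/- There exists a universal constant c > 0 with the following property. Let Z₁,…,Z_t be i.i.d. nonnegative real random variables such that (i) the sub-exponential norm ‖Z₁‖_{ψ₁} := inf{λ > 0 : E exp(Z₁/λ) ≤ 2} is at most b for some b > 0, and (ii) P(Z₁ ≤ h) ≤ q·h for every h > 0, for some q > 0. Then, with κ := min{1/(4qb), 1/2}, P((1/t)·Σ_{τ=1}^t Z_τ ≤ 1/(4q)) ≤ 2·exp(−c·κ²·t). -/

import Mathlib

open MeasureTheory ProbabilityTheory Real

/-- Sub-exponential (ψ₁) Orlicz norm: `inf{λ > 0 : E exp(|Z|/λ) ≤ 2}`. -/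
noncomputable def psi1Norm {Ω : Type*} [MeasurableSpace Ω] (μ : Measure Ω) (Z : Ω → ℝ) : ℝ :=
  sInf {l : ℝ | 0 < l ∧ ∫ ω, Real.exp (|Z ω| / l) ∂μ ≤ 2}

section Aux

open Set

lemma neg_log_le_aux (s : ℝ) (hs : 0 < s) :
    -Real.log s ≤ (s ^ (-(1:ℝ)/10) - 1) * 10 := by
  have h1 : Real.log (s ^ (-(1:ℝ)/10)) = (-(1:ℝ)/10) * Real.log s := Real.log_rpow hs _
  have h2 : Real.log (s ^ (-(1:ℝ)/10)) ≤ s ^ (-(1:ℝ)/10) - 1 :=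
    Real.log_le_sub_one_of_pos (Real.rpow_pos_of_pos hs _)
  linarith [h1 ▸ h2]

lemma mgf_identDistrib_aux {Ω : Type} [MeasurableSpace Ω] {μ : Measure Ω} {X Y : Ω → ℝ}
    (hX : Measurable X) (hY : Measurable Y) (h : IdentDistrib X Y μ μ) (v : ℝ) :
    mgf X μ v = mgf Y μ v := by
  have hc : ∀ (W : Ω → ℝ), Measurable W →
      mgf W μ v = ∫ x, Real.exp (v * x) ∂(μ.map W) := by
    intro W hW
    rw [mgf, integral_map hW.aemeasurable]
    exact (Real.continuous_exp.comp (continuous_const.mul continuous_id)).aestronglyMeasurable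
  rw [hc X hX, hc Y hY, h.map_eq]

lemma numeric_bound_aux (n : ℕ) (k : ℝ) (hk0 : 0 ≤ k) (hk : k ≤ 1/2) :
    Real.exp n * (5/18) ^ n ≤ 2 * Real.exp (-(1/2 * k ^ 2 * n)) := by
  have h98 : Real.exp (9/8) ≤ 3.6 := by
    refine le_of_pow_le_pow_left₀ (n := 8) (by norm_num) (by norm_num) ?_
    have h1 : Real.exp (9/8) ^ 8 = Real.exp 1 ^ 9 := by
      rw [← Real.exp_nat_mul, ← Real.exp_nat_mul]; norm_num
    rw [h1]
    calc Real.exp 1 ^ 9 ≤ 2.7182818286 ^ 9 := by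
          gcongr
          exact Real.exp_one_lt_d9.le
      _ ≤ 3.6 ^ 8 := by norm_num
  have hbase : Real.exp 1 * (5/18) ≤ Real.exp (-(1/8)) := by
    have he : Real.exp (9/8) * Real.exp (-(1/8)) = Real.exp 1 := by
      rw [← Real.exp_add]; norm_num
    calc Real.exp 1 * (5/18) = Real.exp (9/8) * Real.exp (-(1/8)) * (5/18) := by rw [he]
      _ ≤ 3.6 * Real.exp (-(1/8)) * (5/18) := by
          have := Real.exp_pos (-(1/8):ℝ)
          nlinarith
      _ = Real.exp (-(1/8)) := by ring
  have hmain : Real.exp n * (5/18) ^ n ≤ Real.exp (-(1/8)) ^ n := by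
    have h1 : Real.exp 1 ^ n = Real.exp (n:ℝ) := by rw [← Real.exp_nat_mul, mul_one]
    rw [← h1, ← mul_pow]
    exact pow_le_pow_left₀ (by positivity) hbase n
  refine hmain.trans ?_
  rw [← Real.exp_nat_mul]
  have hk2 : k ^ 2 ≤ 1/4 := by nlinarith
  have h2 : Real.exp ((n:ℕ) * (-(1/8):ℝ)) ≤ Real.exp (-(1/2 * k ^ 2 * n)) := by
    apply Real.exp_le_exp.mpr
    have hn : (0:ℝ) ≤ n := Nat.cast_nonneg n
    nlinarith
  refine h2.trans ?_
  nlinarith [Real.exp_pos (-(1/2 * k ^ 2 * (n:ℝ)))]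

lemma factor_bound_aux {Ω : Type} [MeasurableSpace Ω] (μ : Measure Ω) [IsProbabilityMeasure μ]
    (X : Ω → ℝ) (hX : Measurable X) (h0 : ∀ᵐ ω ∂μ, 0 ≤ X ω) (q : ℝ) (hq : 0 < q)
    (hac : ∀ h : ℝ, 0 < h → μ {ω | X ω ≤ h} ≤ ENNReal.ofReal (q * h)) :
    mgf X μ (-(4 * q)) ≤ 5 / 18 := by
  have hmeas : Measurable fun ω => Real.exp (-(4 * q) * X ω) := (hX.const_mul _).exp
  have hnn : ∀ ω, 0 ≤ Real.exp (-(4 * q) * X ω) := fun ω => (Real.exp_pos _).le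
  have hrepr : mgf X μ (-(4 * q)) =
      (∫⁻ ω, ENNReal.ofReal (Real.exp (-(4 * q) * X ω)) ∂μ).toReal :=
    integral_eq_lintegral_of_nonneg_ae (Filter.Eventually.of_forall hnn)
      hmeas.aestronglyMeasurable
  have hlayer : ∫⁻ ω, ENNReal.ofReal (Real.exp (-(4 * q) * X ω)) ∂μ
      = ∫⁻ s in Ioi (0:ℝ), μ {ω | s < Real.exp (-(4 * q) * X ω)} :=
    lintegral_eq_lintegral_meas_lt μ (Filter.Eventually.of_forall hnn) hmeas.aemeasurable
  have h0null : μ {ω | X ω < 0} = 0 := by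
    have := ae_iff.mp h0
    simpa [not_le] using this
  have hpt : ∀ s ∈ Ioi (0:ℝ),
      μ {ω | s < Real.exp (-(4 * q) * X ω)} ≤
        ENNReal.ofReal ((s ^ (-(1:ℝ)/10) - 1) * (5/2)) := by
    intro s hs
    simp only [mem_Ioi] at hs
    rcases le_or_gt 1 s with h1 | h1
    · have hsub : {ω | s < Real.exp (-(4 * q) * X ω)} ⊆ {ω | X ω < 0} := by
        intro ω hω
        simp only [mem_setOf_eq] at hω ⊢
        by_contra hcon
        push_neg at hcon
        have hle : Real.exp (-(4 * q) * X ω) ≤ 1 :=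
          Real.exp_le_one_iff.mpr (by nlinarith)
        linarith
      rw [measure_mono_null hsub h0null]
      exact zero_le
    · have hls : Real.log s < 0 := Real.log_neg hs h1
      set h : ℝ := -Real.log s / (4 * q) with hh
      have hhpos : 0 < h := div_pos (by linarith) (by positivity)
      have hsub : {ω | s < Real.exp (-(4 * q) * X ω)} ⊆ {ω | X ω ≤ h} := by
        intro ω hω
        simp only [mem_setOf_eq] at hω ⊢
        have hlog : Real.log s < -(4 * q) * X ω := (Real.log_lt_iff_lt_exp hs).mpr hω
        rw [hh, le_div_iff₀ (by positivity)]
        nlinarith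
      refine (measure_mono hsub).trans ((hac h hhpos).trans ?_)
      apply ENNReal.ofReal_le_ofReal
      have := neg_log_le_aux s hs
      have hqh : q * h = -Real.log s / 4 := by rw [hh]; field_simp
      rw [hqh]; linarith
  have hg : Measurable fun s : ℝ => ENNReal.ofReal ((s ^ (-(1:ℝ)/10) - 1) * (5/2)) := by
    apply ENNReal.measurable_ofReal.comp
    fun_prop
  have hmono : ∫⁻ s in Ioi (0:ℝ), μ {ω | s < Real.exp (-(4 * q) * X ω)}
      ≤ ∫⁻ s in Ioi (0:ℝ), ENNReal.ofReal ((s ^ (-(1:ℝ)/10) - 1) * (5/2)) :=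
    setLIntegral_mono hg hpt
  have hval : ∫⁻ s in Ioi (0:ℝ), ENNReal.ofReal ((s ^ (-(1:ℝ)/10) - 1) * (5/2))
      ≤ ENNReal.ofReal (5/18) := by
    have hsplit : Ioi (0:ℝ) = Ioc (0:ℝ) 1 ∪ Ioi 1 := (Ioc_union_Ioi_eq_Ioi zero_le_one).symm
    rw [hsplit, lintegral_union measurableSet_Ioi (Ioc_disjoint_Ioi le_rfl)]
    have hzero : ∫⁻ s in Ioi (1:ℝ), ENNReal.ofReal ((s ^ (-(1:ℝ)/10) - 1) * (5/2)) = 0 := by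
      rw [setLIntegral_congr_fun_ae measurableSet_Ioi
        (Filter.Eventually.of_forall (fun s hs => ?_)), lintegral_zero]
      have h1 : s ^ (-(1:ℝ)/10) ≤ 1 :=
        Real.rpow_le_one_of_one_le_of_nonpos (le_of_lt hs) (by norm_num)
      rw [ENNReal.ofReal_eq_zero.mpr (by nlinarith)]
    rw [hzero, add_zero]
    have hii : IntervalIntegrable (fun s : ℝ => s ^ (-(1:ℝ)/10)) volume 0 1 :=
      intervalIntegral.intervalIntegrable_rpow' (by norm_num)
    have hint : IntegrableOn (fun s : ℝ => (s ^ (-(1:ℝ)/10) - 1) * (5/2)) (Ioc 0 1) volume := by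
      apply Integrable.mul_const
      exact hii.1.sub (integrableOn_const measure_Ioc_lt_top.ne)
    have hnn' : 0 ≤ᵐ[volume.restrict (Ioc (0:ℝ) 1)]
        fun s : ℝ => (s ^ (-(1:ℝ)/10) - 1) * (5/2) := by
      rw [Filter.EventuallyLE, ae_restrict_iff' measurableSet_Ioc]
      refine Filter.Eventually.of_forall (fun s hs => ?_)
      have h1 : 1 ≤ s ^ (-(1:ℝ)/10) :=
        Real.one_le_rpow_of_pos_of_le_one_of_nonpos hs.1 hs.2 (by norm_num)
      simp only [Pi.zero_apply]
      nlinarith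
    rw [← ofReal_integral_eq_lintegral_ofReal hint hnn']
    apply ENNReal.ofReal_le_ofReal
    have hval2 : ∫ s in Ioc (0:ℝ) 1, (s ^ (-(1:ℝ)/10) - 1) * (5/2) = 5/18 := by
      rw [← intervalIntegral.integral_of_le zero_le_one,
        intervalIntegral.integral_mul_const,
        intervalIntegral.integral_sub hii intervalIntegrable_const,
        integral_rpow (Or.inl (by norm_num))]
      norm_num
    rw [hval2]
  rw [hrepr, hlayer]
  calc (∫⁻ s in Ioi (0:ℝ), μ {ω | s < Real.exp (-(4 * q) * X ω)}).toReal
      ≤ (ENNReal.ofReal (5/18)).toReal :=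
        ENNReal.toReal_mono ENNReal.ofReal_ne_top (hmono.trans hval)
    _ = 5/18 := by rw [ENNReal.toReal_ofReal (by norm_num)]

end Aux

/-- Bernstein-type concentration below the mean for i.i.d. nonnegative
sub-exponential random variables satisfying a linear anti-concentration bound. -/
theorem subexp_anticoncentration_lower_tail :
    ∃ c : ℝ, 0 < c ∧
      ∀ (Ω : Type) (_ : MeasurableSpace Ω) (μ : Measure Ω), IsProbabilityMeasure μ →
      ∀ (t : ℕ) (ht : 1 ≤ t) (Z : Fin t → Ω → ℝ),
        (∀ τ, Measurable (Z τ)) →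
        iIndepFun Z μ →
        (∀ τ τ' : Fin t, IdentDistrib (Z τ) (Z τ') μ μ) →
        (∀ τ, ∀ᵐ ω ∂μ, 0 ≤ Z τ ω) →
        ∀ (b q : ℝ), 0 < b → 0 < q →
        psi1Norm μ (Z ⟨0, ht⟩) ≤ b →
        (∀ h : ℝ, 0 < h → μ {ω | Z ⟨0, ht⟩ ω ≤ h} ≤ ENNReal.ofReal (q * h)) →
        μ {ω | (1 / (t : ℝ)) * ∑ τ, Z τ ω ≤ 1 / (4 * q)} ≤
          ENNReal.ofReal
            (2 * Real.exp (-(c * (min (1 / (4 * q * b)) (1 / 2)) ^ 2 * t))) := by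
  refine ⟨1/2, by norm_num, ?_⟩
  intro Ω mΩ μ hμ t ht Z hmeas hindep hident hpos b q hb hq _hpsi hac
  have htp : (0:ℝ) < t := by exact_mod_cast Nat.lt_of_lt_of_le Nat.zero_lt_one ht
  -- per-factor mgf bound
  have hfac : ∀ τ : Fin t, mgf (Z τ) μ (-(4 * q)) ≤ 5/18 := by
    intro τ
    rw [mgf_identDistrib_aux (hmeas τ) (hmeas ⟨0, ht⟩) (hident τ ⟨0, ht⟩)]
    exact factor_bound_aux μ _ (hmeas _) (hpos _) q hq hac
  -- integrability of the exponential of the sum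
  have hsum_meas : Measurable (∑ τ, Z τ) := by
    have := Finset.measurable_sum (f := Z) Finset.univ (fun τ _ => hmeas τ)
    rw [Finset.sum_fn]
    exact fun _ _ => this (by assumption)
  have hae : ∀ᵐ ω ∂μ, ∀ τ, 0 ≤ Z τ ω := (ae_all_iff).mpr hpos
  have hint : Integrable (fun ω => Real.exp (-(4 * q) * (∑ τ, Z τ) ω)) μ := by
    refine Integrable.mono' (integrable_const (1:ℝ))
      ((hsum_meas.const_mul _).exp.aestronglyMeasurable) ?_
    filter_upwards [hae] with ω hω
    rw [Real.norm_eq_abs, abs_of_pos (Real.exp_pos _)]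
    refine Real.exp_le_one_iff.mpr ?_
    have hs : 0 ≤ (∑ τ, Z τ) ω := by
      rw [Finset.sum_apply]
      exact Finset.sum_nonneg (fun τ _ => hω τ)
    nlinarith
  -- Chernoff bound
  have hmarkov := measure_le_le_exp_mul_mgf (μ := μ) (X := ∑ τ, Z τ) ((t:ℝ)/(4*q))
    (by nlinarith : -(4*q) ≤ 0) hint
  have hexp : -(-(4*q)) * ((t:ℝ)/(4*q)) = (t:ℝ) := by field_simp
  rw [hexp] at hmarkov
  have hmgfsum : mgf (∑ τ, Z τ) μ (-(4*q)) = ∏ τ, mgf (Z τ) μ (-(4*q)) :=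
    hindep.mgf_sum hmeas Finset.univ
  have hprod : ∏ τ, mgf (Z τ) μ (-(4*q)) ≤ (5/18 : ℝ) ^ t := by
    calc ∏ τ, mgf (Z τ) μ (-(4*q)) ≤ ∏ _τ : Fin t, (5/18 : ℝ) :=
          Finset.prod_le_prod (fun τ _ => mgf_nonneg) (fun τ _ => hfac τ)
      _ = (5/18 : ℝ) ^ t := by rw [Finset.prod_const, Finset.card_univ, Fintype.card_fin]
  -- rewrite the event
  have hset : {ω | (1 / (t : ℝ)) * ∑ τ, Z τ ω ≤ 1 / (4 * q)}
      = {ω | (∑ τ, Z τ) ω ≤ (t:ℝ)/(4*q)} := by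
    ext ω
    simp only [Set.mem_setOf_eq, Finset.sum_apply]
    rw [one_div, inv_mul_le_iff₀ htp, mul_one_div]
  rw [hset]
  -- conclude
  rw [ENNReal.le_ofReal_iff_toReal_le (measure_ne_top μ _) (by positivity)]
  calc (μ {ω | (∑ τ, Z τ) ω ≤ (t:ℝ)/(4*q)}).toReal
      ≤ Real.exp t * mgf (∑ τ, Z τ) μ (-(4*q)) := hmarkov
    _ ≤ Real.exp t * ((5/18 : ℝ) ^ t) := by
        have := (Real.exp_pos (t:ℝ)).le
        rw [hmgfsum]
        exact mul_le_mul_of_nonneg_left hprod this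
    _ ≤ 2 * Real.exp (-(1/2 * (min (1 / (4 * q * b)) (1 / 2)) ^ 2 * t)) := by
        apply numeric_bound_aux
        · positivity
        · exact min_le_right _ _
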